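/- arXiv:1809.06910 — 4 statements merged into one kernel-verified Lean document; each statement's English description precedes it below -/
import Mathlib

section
/- Let G be a connected undirected graph on n ≥ 2 vertices with doubled-edge oriented incidence matrix B ∈ ℝ^{n×ℓ}, let r ≥ 1, γ > 0, t₀ ∈ ℝ, and let φ : ℝ → ℝ^{nr} be a differentiable stacked reference signal with finite constants φ̄, dφ̄ such that ‖(Bᵀ⊗I_r)φ(t)‖_∞ ≤ φ̄ and ‖(Bᵀ⊗I_r)φ'(t)‖_∞ ≤ dφ̄ for all t ≥ t₀. For each agent i ∈ {1,…,n} let β_i ≥ (γφ̄ + dφ̄)·‖B(BᵀB)⁺ ⊗ I_r‖_∞, α_i > 0, δ_i ≥ 1, θ_i ∈ (0,1). Suppose x̂ : ℝ → ℝ^{nr} (the broadcast states), z : ℝ → ℝ^{nr}, κ₁,…,κ_{rℓ} : ℝ → ℝ, and η₁,…,η_n : ℝ → ℝ are such that z, the κⱼ, and the η_i are differentiable on [t₀,∞) and, writing x(t) = z(t) + φ(t), ξ̂(t) = (Bᵀ⊗I_r)x̂(t), K̂(t) = diag(κ₁(t),…,κ_{rℓ}(t)), w(t) = (B⊗I_r)K̂(t)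 sgn(ξ̂(t)) with agent blocks w_i(t) ∈ ℝ^r, and ε(t) = x(t) − x̂(t) with agent blocks ε_i(t) ∈ ℝ^r, the following hold for all t ≥ t₀: z'(t) = −γ z(t) − w(t); κⱼ'(t) = |ξ̂ⱼ(t)| with κⱼ(t₀) ≥ 0 for each j; η_i'(t) = −α_i η_i(t) − δ_i (β_i ‖ε_i(t)‖₁ − w_i(t)ᵀ ε_i(t)) with η_i(t₀) > 0 for each i; and the triggering inequality θ_i (β_i ‖ε_i(t)‖₁ − w_i(t)ᵀ ε_i(t)) ≤ η_i(t) holds for each i. Then the average-consensus error x̃(t) = x(t) − ((1/n)1_n1_nᵀ ⊗ I_r) φ(t) converges to 0 as t → ∞, for every initial condition z(t₀). -/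
open Matrix Kronecker Filter Topology

/-- Doubled-edge oriented incidence matrix of a simple graph. -/
noncomputable def dartIncidence {V : Type*} [Fintype V] [DecidableEq V] (G : SimpleGraph V)
    [DecidableRel G.Adj] : Matrix V G.Dart ℝ :=
  Matrix.of fun v d => if d.snd = v then 1 else if d.fst = v then -1 else 0

/-- Maximum absolute row-sum norm of a real matrix. -/
noncomputable def matInfNorm {m n : Type*} [Fintype m] [Fintype n] (A : Matrix m n ℝ) : ℝ :=
  ⨆ i, ∑ j, |A i j|




lemma mul_sign_eq_abs (x : ℝ) : x * Real.sign x = |x| := by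
  rcases lt_trichotomy x 0 with h|h|h
  · rw [Real.sign_of_neg h, abs_of_neg h]; ring
  · simp [h]
  · rw [Real.sign_of_pos h, abs_of_pos h]; ring

lemma abs_sign_le_one (x : ℝ) : |Real.sign x| ≤ 1 := by
  rcases lt_trichotomy x 0 with h|h|h
  · rw [Real.sign_of_neg h]; norm_num
  · simp [h]
  · rw [Real.sign_of_pos h]; norm_num

lemma sum_pair_ite {V : Type*} [Fintype V] [DecidableEq V] (a b : V) (hab : a ≠ b)
    (f : V → ℝ) (xv yv : ℝ) :
    (∑ u, (if a = u then xv else if b = u then yv else 0) * f u) = xv * f a + yv * f b := by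
  have h : ∀ u, (if a = u then xv else if b = u then yv else 0) * f u
      = (if u = a then xv * f a else 0) + (if u = b then yv * f b else 0) := by
    intro u
    by_cases h1 : a = u <;> by_cases h2 : b = u <;> simp_all [eq_comm]
  rw [Finset.sum_congr rfl fun u _ => h u, Finset.sum_add_distrib]
  simp

lemma rowsum_le_matInfNorm' {m n : Type*} [Fintype m] [Fintype n] (A : Matrix m n ℝ) (i : m) :
    ∑ j, |A i j| ≤ ⨆ i, ∑ j, |A i j| :=
  le_ciSup (f := fun i => ∑ j, |A i j|) (Set.Finite.bddAbove (Set.finite_range _)) i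

lemma abs_mulVec_le {m n : Type*} [Fintype m] [Fintype n] (A : Matrix m n ℝ) (v : n → ℝ)
    (c : ℝ) (hv : ∀ j, |v j| ≤ c) (i : m) :
    |A.mulVec v i| ≤ (∑ j, |A i j|) * c := by
  calc |A.mulVec v i| = |∑ j, A i j * v j| := rfl
    _ ≤ ∑ j, |A i j * v j| := Finset.abs_sum_le_sum_abs _ _
    _ ≤ ∑ j, |A i j| * c := by
        refine Finset.sum_le_sum fun j _ => ?_
        rw [abs_mul]
        exact mul_le_mul_of_nonneg_left (hv j) (abs_nonneg _)
    _ = (∑ j, |A i j|) * c := by rw [Finset.sum_mul]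

lemma pinv_unique {n : Type*} [Fintype n] [DecidableEq n] (A P Q : Matrix n n ℝ)
    (hP1 : A * P * A = A) (hP2 : P * A * P = P) (hP3 : (A * P)ᵀ = A * P) (hP4 : (P * A)ᵀ = P * A)
    (hQ1 : A * Q * A = A) (hQ2 : Q * A * Q = Q) (hQ3 : (A * Q)ᵀ = A * Q) (hQ4 : (Q * A)ᵀ = Q * A) :
    P = Q := by
  have hAP : A * P = A * Q := by
    calc A * P = (A * Q * A) * P := by rw [hQ1]
      _ = (A * Q) * (A * P) := by noncomm_ring
      _ = (A * Q)ᵀ * (A * P)ᵀ := by rw [hQ3, hP3]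
      _ = Qᵀ * (Aᵀ * Pᵀ * Aᵀ) := by rw [Matrix.transpose_mul, Matrix.transpose_mul]; noncomm_ring
      _ = Qᵀ * (A * P * A)ᵀ := by simp only [Matrix.transpose_mul, Matrix.mul_assoc]
      _ = Qᵀ * Aᵀ := by rw [hP1]
      _ = (A * Q)ᵀ := by rw [Matrix.transpose_mul]
      _ = A * Q := hQ3
  have hPA : P * A = Q * A := by
    calc P * A = P * (A * Q * A) := by rw [hQ1]
      _ = (P * A) * (Q * A) := by noncomm_ring
      _ = (P * A)ᵀ * (Q * A)ᵀ := by rw [hP4, hQ4]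
      _ = (Aᵀ * Pᵀ * Aᵀ) * Qᵀ := by rw [Matrix.transpose_mul, Matrix.transpose_mul]; noncomm_ring
      _ = (A * P * A)ᵀ * Qᵀ := by simp only [Matrix.transpose_mul, Matrix.mul_assoc]
      _ = Aᵀ * Qᵀ := by rw [hP1]
      _ = (Q * A)ᵀ := by rw [Matrix.transpose_mul]
      _ = Q * A := hQ4
  calc P = P * A * P := hP2.symm
    _ = Q * A * P := by rw [hPA]
    _ = Q * (A * P) := by rw [Matrix.mul_assoc]
    _ = Q * (A * Q) := by rw [hAP]
    _ = Q * A * Q := by rw [Matrix.mul_assoc]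
    _ = Q := hQ2

lemma pinv_symm {n : Type*} [Fintype n] [DecidableEq n] (A P : Matrix n n ℝ) (hA : Aᵀ = A)
    (hP1 : A * P * A = A) (hP2 : P * A * P = P) (hP3 : (A * P)ᵀ = A * P) (hP4 : (P * A)ᵀ = P * A) :
    Pᵀ = P := by
  refine (pinv_unique A Pᵀ P ?_ ?_ ?_ ?_ hP1 hP2 hP3 hP4)
  · calc A * Pᵀ * A = (Aᵀ * P * Aᵀ)ᵀ := by
          simp only [Matrix.transpose_mul, Matrix.transpose_transpose, hA, Matrix.mul_assoc]
      _ = A := by rw [hA, hP1, hA]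
  · calc Pᵀ * A * Pᵀ = (P * Aᵀ * P)ᵀ := by
          simp only [Matrix.transpose_mul, Matrix.transpose_transpose, hA, Matrix.mul_assoc]
      _ = Pᵀ := by rw [hA, hP2]
  · calc (A * Pᵀ)ᵀ = P * Aᵀ := by rw [Matrix.transpose_mul, Matrix.transpose_transpose]
      _ = P * A := by rw [hA]
      _ = (P * A)ᵀ := hP4.symm
      _ = Aᵀ * Pᵀ := by rw [Matrix.transpose_mul]
      _ = A * Pᵀ := by rw [hA]
  · calc (Pᵀ * A)ᵀ = Aᵀ * P := by rw [Matrix.transpose_mul, Matrix.transpose_transpose]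
      _ = A * P := by rw [hA]
      _ = (A * P)ᵀ := hP3.symm
      _ = Pᵀ * Aᵀ := by rw [Matrix.transpose_mul]
      _ = Pᵀ * A := by rw [hA]

lemma transpose_mul_self_eq_zero' {m n : Type*} [Fintype m] [Fintype n] (M : Matrix m n ℝ)
    (h : Mᵀ * M = 0) : M = 0 := by
  have h2 : Mᴴ * M = 0 := by
    have he : Mᴴ = Mᵀ := by ext i j; simp [Matrix.conjTranspose_apply]
    rw [he]; exact h
  exact Matrix.conjTranspose_mul_self_eq_zero.mp h2

lemma BPA_eq_B {m n : Type*} [Fintype m] [Fintype n] [DecidableEq n] (B : Matrix m n ℝ)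
    (P : Matrix n n ℝ) (hP1 : (Bᵀ * B) * P * (Bᵀ * B) = Bᵀ * B) :
    B * P * (Bᵀ * B) = B := by
  set A := Bᵀ * B with hA
  set N := P * A - 1 with hN
  have hBN : B * P * A - B = B * N := by
    rw [hN, Matrix.mul_sub, Matrix.mul_one, Matrix.mul_assoc]
  have hAN : A * N = 0 := by
    rw [hN, Matrix.mul_sub, Matrix.mul_one, ← Matrix.mul_assoc]
    rw [hP1]; simp
  have key : (B * N)ᵀ * (B * N) = 0 := by
    calc (B * N)ᵀ * (B * N) = Nᵀ * (Bᵀ * (B * N)) := by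
          rw [Matrix.transpose_mul, Matrix.mul_assoc]
      _ = Nᵀ * (A * N) := by rw [hA, Matrix.mul_assoc]
      _ = 0 := by rw [hAN, Matrix.mul_zero]
  have hz := transpose_mul_self_eq_zero' _ key
  rw [hz] at hBN
  exact sub_eq_zero.mp hBN
section Graph
variable {V : Type*} [Fintype V] [DecidableEq V] (G : SimpleGraph V) [DecidableRel G.Adj]

lemma dart_col_mul (d : G.Dart) (f : V → ℝ) :
    (∑ u, dartIncidence G u d * f u) = f d.snd - f d.fst := by
  have h := sum_pair_ite d.snd d.fst (SimpleGraph.Dart.snd_ne_fst d) f 1 (-1)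
  simp only [dartIncidence, Matrix.of_apply]
  rw [h]; ring

lemma dart_col_sum (d : G.Dart) : (∑ u, dartIncidence G u d) = 0 := by
  have h := dart_col_mul G d (fun _ => 1)
  simpa using h

lemma connected_const (hG : G.Connected) (v : V → ℝ)
    (h : ∀ d : G.Dart, v d.snd = v d.fst) (a b : V) : v a = v b := by
  obtain ⟨p⟩ := hG a b
  induction p with
  | nil => rfl
  | cons hadj p ih =>
      rename_i u c _
      have h2 : v u = v c := (h ⟨(u, c), hadj⟩).symm
      rw [h2]; exact ih

lemma proj_identity (hG : G.Connected) (P : Matrix G.Dart G.Dart ℝ)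
    (hP1 : ((dartIncidence G)ᵀ * dartIncidence G) * P * ((dartIncidence G)ᵀ * dartIncidence G)
        = (dartIncidence G)ᵀ * dartIncidence G)
    (hP2 : P * ((dartIncidence G)ᵀ * dartIncidence G) * P = P)
    (hP3 : (((dartIncidence G)ᵀ * dartIncidence G) * P)ᵀ
        = ((dartIncidence G)ᵀ * dartIncidence G) * P)
    (hP4 : (P * ((dartIncidence G)ᵀ * dartIncidence G))ᵀ
        = P * ((dartIncidence G)ᵀ * dartIncidence G)) :
    dartIncidence G * P * (dartIncidence G)ᵀ
      = 1 - Matrix.of (fun _ _ : V => (1 : ℝ) / Fintype.card V) := by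
  classical
  have : Nonempty V := hG.nonempty
  set B := dartIncidence G with hB
  set A := Bᵀ * B with hA
  have hAT : Aᵀ = A := by rw [hA, Matrix.transpose_mul, Matrix.transpose_transpose]
  have hPT : Pᵀ = P := pinv_symm A P hAT hP1 hP2 hP3 hP4
  have hBPA : B * P * A = B := BPA_eq_B B P hP1
  have hABP : A * P * Bᵀ = Bᵀ := by
    have h := congrArg Matrix.transpose hBPA
    simp only [Matrix.transpose_mul, Matrix.transpose_transpose] at h
    rw [hAT, hPT] at h
    calc A * P * Bᵀ = A * (P * Bᵀ) := by rw [Matrix.mul_assoc]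
      _ = Bᵀ := h
  set Q := B * P * Bᵀ with hQ
  have hQT : Qᵀ = Q := by
    rw [hQ]; simp only [Matrix.transpose_mul, Matrix.transpose_transpose, hPT, Matrix.mul_assoc]
  have hBTQ : Bᵀ * Q = Bᵀ := by
    have h : Bᵀ * Q = A * P * Bᵀ := by rw [hQ, hA]; simp only [Matrix.mul_assoc]
    rw [h, hABP]
  set Jv : Matrix V V ℝ := Matrix.of (fun _ _ : V => (1 : ℝ) / Fintype.card V) with hJv
  set S : Matrix V V ℝ := (1 - Jv) - Q with hS
  have hn0 : (Fintype.card V : ℝ) ≠ 0 := Nat.cast_ne_zero.mpr Fintype.card_ne_zero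
  have hBTJ : Bᵀ * Jv = 0 := by
    ext d v
    simp only [Matrix.mul_apply, Matrix.transpose_apply, Matrix.zero_apply, hJv, Matrix.of_apply]
    rw [show (∑ u, B u d * (1 / (Fintype.card V : ℝ)))
        = (1 : ℝ) / Fintype.card V - 1 / Fintype.card V from dart_col_mul G d _]
    ring
  have hBTS : Bᵀ * S = 0 := by
    rw [hS, Matrix.mul_sub, Matrix.mul_sub, Matrix.mul_one, hBTJ, hBTQ]
    simp
  have hST : Sᵀ = S := by
    rw [hS]
    have hJT : Jvᵀ = Jv := by ext a b; simp [hJv]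
    simp [Matrix.transpose_sub, hJT, hQT]
  have hQrow : ∀ u, (∑ v, Q u v) = 0 := by
    intro u
    have h1 : Q.mulVec (fun _ => 1) = fun u => ∑ v, Q u v := by
      funext a; simp [Matrix.mulVec, dotProduct]
    have h2 : Bᵀ.mulVec (fun _ => (1:ℝ)) = 0 := by
      funext d
      simp only [Matrix.mulVec, dotProduct, Matrix.transpose_apply, Pi.zero_apply]
      simpa using dart_col_sum G d
    have h3 : Q.mulVec (fun _ => (1:ℝ)) = 0 := by
      rw [hQ, ← Matrix.mulVec_mulVec, h2, Matrix.mulVec_zero]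
    rw [← congrFun h1 u, h3]; rfl
  have hSrow : ∀ u, (∑ v, S u v) = 0 := by
    intro u
    have h1 : (∑ v, (1 : Matrix V V ℝ) u v) = 1 := by simp [Matrix.one_apply]
    have h2 : (∑ v, Jv u v) = 1 := by
      simp [hJv, Finset.sum_const]
    simp only [hS, Matrix.sub_apply, Finset.sum_sub_distrib, h1, h2, hQrow u]
    ring
  have hcol : ∀ (b : V) (a a' : V), S a b = S a' b := by
    intro b a a'
    refine connected_const G hG (fun u => S u b) (fun d => ?_) a a'
    have h0 := congrFun (congrFun hBTS d) b
    simp only [Matrix.mul_apply, Matrix.transpose_apply, Matrix.zero_apply] at h0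
    rw [dart_col_mul G d (fun u => S u b)] at h0
    linarith
  have hsym : ∀ a b, S a b = S b a := by
    intro a b
    have := congrFun (congrFun hST a) b
    simpa [Matrix.transpose_apply] using this.symm
  have hS0 : S = 0 := by
    obtain ⟨a₀⟩ := ‹Nonempty V›
    have hcst : ∀ a b, S a b = S a₀ a₀ := by
      intro a b
      calc S a b = S a₀ b := hcol b a a₀
        _ = S b a₀ := hsym a₀ b
        _ = S a₀ a₀ := hcol a₀ b a₀
    have hrow := hSrow a₀
    rw [Finset.sum_congr rfl (fun v _ => hcst a₀ v)] at hrow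
    simp only [Finset.sum_const, Finset.card_univ, nsmul_eq_mul] at hrow
    have hz : S a₀ a₀ = 0 := by
      rcases mul_eq_zero.mp hrow with h | h
      · exact absurd h hn0
      · exact h
    ext a b
    rw [hcst a b, hz]; rfl
  have := sub_eq_zero.mp hS0
  rw [← this]
end Graph

lemma hasDerivAt_mulVec {m n : Type*} [Fintype m] [Fintype n] (A : Matrix m n ℝ)
    (φ : ℝ → n → ℝ) (v : n → ℝ) (t : ℝ) (h : HasDerivAt φ v t) :
    HasDerivAt (fun s => A.mulVec (φ s)) (A.mulVec v) t := by
  have hc := (Matrix.mulVecLin A).toContinuousLinearMap.hasFDerivAt (x := φ t)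
  have := hc.comp_hasDerivAt t h
  exact this

lemma hasDerivAt_apply_pi {ι : Type*} [Fintype ι] (f : ℝ → ι → ℝ) (v : ι → ℝ) (t : ℝ)
    (h : HasDerivAt f v t) (p : ι) : HasDerivAt (fun s => f s p) (v p) t := by
  have hc := (ContinuousLinearMap.proj (R := ℝ) (φ := fun _ : ι => ℝ) p).hasFDerivAt (x := f t)
  have := hc.comp_hasDerivAt t h
  exact this

lemma monoOn_of_hasDerivAt (s : Set ℝ) (hconv : Convex ℝ s) (f f' : ℝ → ℝ)
    (hd : ∀ t ∈ s, HasDerivAt f (f' t) t) (h0 : ∀ t ∈ s, 0 ≤ f' t) : MonotoneOn f s := by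
  refine monotoneOn_of_deriv_nonneg hconv
    (fun t ht => (hd t ht).continuousAt.continuousWithinAt)
    (fun t ht => (hd t (interior_subset ht)).differentiableAt.differentiableWithinAt)
    (fun t ht => ?_)
  rw [(hd t (interior_subset ht)).deriv]
  exact h0 t (interior_subset ht)

lemma antiOn_of_hasDerivAt (s : Set ℝ) (hconv : Convex ℝ s) (f f' : ℝ → ℝ)
    (hd : ∀ t ∈ s, HasDerivAt f (f' t) t) (h0 : ∀ t ∈ s, f' t ≤ 0) : AntitoneOn f s := by
  refine antitoneOn_of_deriv_nonpos hconv
    (fun t ht => (hd t ht).continuousAt.continuousWithinAt)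
    (fun t ht => (hd t (interior_subset ht)).differentiableAt.differentiableWithinAt)
    (fun t ht => ?_)
  rw [(hd t (interior_subset ht)).deriv]
  exact h0 t (interior_subset ht)

lemma lipschitz_lower {t₀ L : ℝ} (f f' : ℝ → ℝ)
    (hd : ∀ t ≥ t₀, HasDerivAt f (f' t) t) (hL : ∀ t ≥ t₀, -L ≤ f' t) :
    ∀ s t, t₀ ≤ s → s ≤ t → f s - L * (t - s) ≤ f t := by
  intro s t hs hst
  have hmono : MonotoneOn (fun u => f u + L * u) (Set.Ici t₀) := by
    refine monoOn_of_hasDerivAt _ (convex_Ici t₀) _ (fun u => f' u + L)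
      (fun u hu => ((hd u hu).add ((hasDerivAt_id u).const_mul L)).congr_deriv (by ring))
      (fun u hu => by have h := hL u hu; show (0:ℝ) ≤ f' u + L; linarith)
  have := hmono hs (le_trans hs hst) hst
  simp only at this
  linarith

lemma lyapunov_tendsto_zero {t₀ γ L : ℝ} (hγ : 0 < γ) (hL : 0 < L)
    (f V V' : ℝ → ℝ)
    (hf0 : ∀ t ≥ t₀, 0 ≤ f t)
    (hV0 : ∀ t ≥ t₀, 0 ≤ V t)
    (hVd : ∀ t ≥ t₀, HasDerivAt V (V' t) t)
    (hV' : ∀ t ≥ t₀, V' t ≤ -(γ * f t))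
    (hlip : ∀ s t, t₀ ≤ s → s ≤ t → f s - L * (t - s) ≤ f t) :
    Tendsto f atTop (nhds 0) := by
  have hVanti : AntitoneOn V (Set.Ici t₀) := by
    refine antiOn_of_hasDerivAt _ (convex_Ici t₀) _ _ (fun u hu => hVd u hu) (fun u hu => ?_)
    have := hV' u hu
    have := hf0 u hu
    nlinarith
  -- drop estimate
  have hdrop : ∀ a > 0, ∀ u ≥ t₀, a < f u →
      V (u + a / (2 * L)) ≤ V u - γ * (a / 2) * (a / (2 * L)) := by
    intro a ha u hu hfu
    set d := a / (2 * L) with hdd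
    have hd0 : 0 < d := by positivity
    have hflow : ∀ s ∈ Set.Icc u (u + d), a / 2 ≤ f s := by
      intro s hs
      have h1 := hlip u s (hu) hs.1
      have h2 : L * (s - u) ≤ L * d := by
        have : s - u ≤ d := by linarith [hs.2]
        exact mul_le_mul_of_nonneg_left this (le_of_lt hL)
      have h3 : L * d = a / 2 := by rw [hdd]; field_simp
      nlinarith
    have hanti : AntitoneOn (fun s => V s + γ * (a / 2) * s) (Set.Icc u (u + d)) := by
      refine antiOn_of_hasDerivAt _ (convex_Icc _ _) _ (fun s => V' s + γ * (a / 2))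
        (fun s hs => ((hVd s (le_trans hu hs.1)).add
          ((hasDerivAt_id s).const_mul (γ * (a / 2)))).congr_deriv (by ring))
        (fun s hs => ?_)
      have h1 := hV' s (le_trans hu hs.1)
      have h2 := hflow s hs
      nlinarith
    have hmem1 : u ∈ Set.Icc u (u + d) := ⟨le_refl _, by linarith⟩
    have hmem2 : u + d ∈ Set.Icc u (u + d) := ⟨by linarith, le_refl _⟩
    have := hanti hmem1 hmem2 (by linarith)
    simp only at this
    linarith
  -- main claim
  have hmain : ∀ a > 0, ∃ T ≥ t₀, ∀ t ≥ T, f t ≤ a := by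
    intro a ha
    by_contra hcon
    push_neg at hcon
    set c := γ * (a / 2) * (a / (2 * L)) with hc
    have hc0 : 0 < c := by positivity
    have hrec : ∀ k : ℕ, ∃ t ≥ t₀, V t ≤ V t₀ - k * c := by
      intro k
      induction k with
      | zero => exact ⟨t₀, le_refl _, by simp⟩
      | succ k ih =>
          obtain ⟨t, ht, hVt⟩ := ih
          obtain ⟨t', ht', hft'⟩ := hcon t ht
          have ht'0 : t₀ ≤ t' := le_trans ht ht'
          have h1 := hdrop a ha t' ht'0 hft'
          have h2 : V t' ≤ V t := hVanti (by exact ht) (by exact ht'0) ht'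
          refine ⟨t' + a / (2 * L), ?_, ?_⟩
          · have : 0 < a / (2 * L) := by positivity
            linarith
          · push_cast
            linarith
    obtain ⟨k, hk⟩ := exists_nat_gt (V t₀ / c)
    obtain ⟨t, ht, hVt⟩ := hrec k
    have h1 : V t₀ / c < k := hk
    have h2 : V t₀ < k * c := by
      rw [div_lt_iff₀ hc0] at h1
      linarith
    have h3 := hV0 t ht
    linarith
  rw [Metric.tendsto_atTop]
  intro e he
  obtain ⟨T, hT, hTf⟩ := hmain (e / 2) (by positivity)
  refine ⟨T, fun t ht => ?_⟩
  have h1 := hTf t ht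
  have h2 := hf0 t (le_trans hT ht)
  rw [Real.dist_eq, abs_of_nonneg (by linarith)]
  linarith

lemma sub_kronecker' {l m n p : Type*} [Fintype l] [Fintype m] [Fintype n] [Fintype p]
    (A B : Matrix l m ℝ) (C : Matrix n p ℝ) :
    (A - B) ⊗ₖ C = A ⊗ₖ C - B ⊗ₖ C := by
  ext i j
  simp [Matrix.kroneckerMap_apply, sub_mul]


set_option maxHeartbeats 1000000 in
/-- asymptotic convergence of the dynamic event-triggered robust dynamic average
consensus algorithm `ż = -γ z - w`, `w = (B ⊗ I_r) K̂(t) sgn((Bᵀ ⊗ I_r) x̂)`, `x = z + φ`, with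
adaptive gains `κ̇ⱼ = |ξ̂ⱼ|`, internal triggering dynamics
`η̇ᵢ = -αᵢ ηᵢ - δᵢ (βᵢ ‖εᵢ‖₁ - wᵢᵀ εᵢ)` and enforced triggering inequality
`θᵢ (βᵢ ‖εᵢ‖₁ - wᵢᵀ εᵢ) ≤ ηᵢ`: the error `x̃(t) = x(t) - ((1/n) 1ₙ1ₙᵀ ⊗ I_r) φ(t)` tends
to `0` for every initial condition.  (Norms on `ι → ℝ` are sup norms; `P` is the Moore–Penrose
pseudoinverse of `BᵀB`, characterized by the four Penrose conditions.) -/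
theorem event_triggered_robust_dac_asymptotic_convergence
    {V : Type*} [Fintype V] [DecidableEq V] (G : SimpleGraph V) [DecidableRel G.Adj]
    (hG : G.Connected) (hn : 2 ≤ Fintype.card V)
    (r : ℕ) (hr : 1 ≤ r) (γ : ℝ) (hγ : 0 < γ) (t₀ : ℝ)
    (φ φ' : ℝ → V × Fin r → ℝ) (hφ : ∀ t : ℝ, HasDerivAt φ (φ' t) t)
    (φbar dφbar : ℝ)
    (hφbar : ∀ t ≥ t₀,
      ‖((dartIncidence G)ᵀ ⊗ₖ (1 : Matrix (Fin r) (Fin r) ℝ)).mulVec (φ t)‖ ≤ φbar)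
    (hdφbar : ∀ t ≥ t₀,
      ‖((dartIncidence G)ᵀ ⊗ₖ (1 : Matrix (Fin r) (Fin r) ℝ)).mulVec (φ' t)‖ ≤ dφbar)
    -- Moore–Penrose pseudoinverse `P = (BᵀB)⁺`
    (P : Matrix G.Dart G.Dart ℝ)
    (hP1 : ((dartIncidence G)ᵀ * dartIncidence G) * P * ((dartIncidence G)ᵀ * dartIncidence G)
        = (dartIncidence G)ᵀ * dartIncidence G)
    (hP2 : P * ((dartIncidence G)ᵀ * dartIncidence G) * P = P)
    (hP3 : (((dartIncidence G)ᵀ * dartIncidence G) * P)ᵀ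
        = ((dartIncidence G)ᵀ * dartIncidence G) * P)
    (hP4 : (P * ((dartIncidence G)ᵀ * dartIncidence G))ᵀ
        = P * ((dartIncidence G)ᵀ * dartIncidence G))
    -- local design parameters
    (β α δ θ : V → ℝ)
    (hβ : ∀ i, (γ * φbar + dφbar) *
      matInfNorm ((dartIncidence G * P) ⊗ₖ (1 : Matrix (Fin r) (Fin r) ℝ)) ≤ β i)
    (hα : ∀ i, 0 < α i) (hδ : ∀ i, 1 ≤ δ i) (hθ : ∀ i, θ i ∈ Set.Ioo (0 : ℝ) 1)
    -- states, broadcast states, adaptive gains, internal triggering variables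
    (z xhat : ℝ → V × Fin r → ℝ) (κ : G.Dart × Fin r → ℝ → ℝ) (η : V → ℝ → ℝ)
    (x : ℝ → V × Fin r → ℝ) (hx : ∀ t : ℝ, x t = z t + φ t)
    (ξhat : ℝ → G.Dart × Fin r → ℝ)
    (hξhat : ∀ t : ℝ,
      ξhat t = ((dartIncidence G)ᵀ ⊗ₖ (1 : Matrix (Fin r) (Fin r) ℝ)).mulVec (xhat t))
    (w : ℝ → V × Fin r → ℝ)
    (hw : ∀ t : ℝ, w t = (dartIncidence G ⊗ₖ (1 : Matrix (Fin r) (Fin r) ℝ)).mulVec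
      ((Matrix.diagonal fun j => κ j t).mulVec fun j => Real.sign (ξhat t j)))
    (ε : ℝ → V × Fin r → ℝ) (hε : ∀ t : ℝ, ε t = x t - xhat t)
    -- dynamics
    (hz : ∀ t ≥ t₀, HasDerivAt z (-γ • z t - w t) t)
    (hκ : ∀ j, ∀ t ≥ t₀, HasDerivAt (κ j) |ξhat t j| t)
    (hκ0 : ∀ j, 0 ≤ κ j t₀)
    (hη : ∀ i, ∀ t ≥ t₀, HasDerivAt (η i)
      (-α i * η i t - δ i *
        (β i * (∑ a, |ε t (i, a)|) - ∑ a, w t (i, a) * ε t (i, a))) t)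
    (hη0 : ∀ i, 0 < η i t₀)
    -- the triggering mechanism enforces this inequality at all times
    (htrig : ∀ i, ∀ t ≥ t₀,
      θ i * (β i * (∑ a, |ε t (i, a)|) - ∑ a, w t (i, a) * ε t (i, a)) ≤ η i t) :
    Filter.Tendsto (fun t => x t -
        ((Matrix.of fun _ _ : V => (1 : ℝ) / Fintype.card V)
          ⊗ₖ (1 : Matrix (Fin r) (Fin r) ℝ)).mulVec (φ t))
      Filter.atTop (nhds 0) := by
  classical
  -- abbreviations
  set Bm : Matrix V G.Dart ℝ := dartIncidence G with hBm
  set Ir : Matrix (Fin r) (Fin r) ℝ := 1 with hIr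
  set BTr : Matrix (G.Dart × Fin r) (V × Fin r) ℝ := Bmᵀ ⊗ₖ Ir with hBTr
  set Br : Matrix (V × Fin r) (G.Dart × Fin r) ℝ := Bm ⊗ₖ Ir with hBr2
  set Jv : Matrix V V ℝ := Matrix.of (fun _ _ : V => (1 : ℝ) / Fintype.card V) with hJv
  set J : Matrix (V × Fin r) (V × Fin r) ℝ := Jv ⊗ₖ Ir with hJ
  set Pr : Matrix (G.Dart × Fin r) (G.Dart × Fin r) ℝ := P ⊗ₖ Ir with hPr
  set hmat : Matrix (V × Fin r) (G.Dart × Fin r) ℝ := (Bm * P) ⊗ₖ Ir with hhmat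
  set y : ℝ → V × Fin r → ℝ := fun t => x t - J.mulVec (φ t) with hy
  set g : ℝ → G.Dart × Fin r → ℝ :=
    fun t => γ • BTr.mulVec (φ t) + BTr.mulVec (φ' t) with hg
  set hfun : ℝ → V × Fin r → ℝ := fun t => hmat.mulVec (g t) with hhfun
  set yd : ℝ → V × Fin r → ℝ := fun t => (-γ) • y t + hfun t - w t with hyd
  set uvec : ℝ → G.Dart × Fin r → ℝ := fun t j => κ j t * Real.sign (ξhat t j) with huvec
  set f : ℝ → ℝ := fun t => ∑ p, (y t p)^2 with hf
  set c : ℝ := γ * φbar + dφbar with hc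
  set κbar : ℝ := matInfNorm Pr * c with hκbar
  set Mc : ℝ := matInfNorm hmat * c with hMc
  set si : V → ℝ → ℝ :=
    fun i t => β i * (∑ a, |ε t (i, a)|) - ∑ a, w t (i, a) * ε t (i, a) with hsi
  -- basic parameter facts
  have hφb0 : 0 ≤ φbar := le_trans (norm_nonneg _) (hφbar t₀ (le_refl _))
  have hdφb0 : 0 ≤ dφbar := le_trans (norm_nonneg _) (hdφbar t₀ (le_refl _))
  have hc0 : 0 ≤ c := by positivity
  have hmatN0 : 0 ≤ matInfNorm hmat :=
    Real.iSup_nonneg fun i => Finset.sum_nonneg fun j _ => abs_nonneg _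
  have hMc0 : 0 ≤ Mc := mul_nonneg hmatN0 hc0
  have hMcβ : ∀ i, Mc ≤ β i := by
    intro i
    have h := hβ i
    rw [hMc, mul_comm]
    exact h
  -- structural matrix identities
  have hAT : (Bmᵀ * Bm)ᵀ = Bmᵀ * Bm := by
    rw [Matrix.transpose_mul, Matrix.transpose_transpose]
  have hPT : Pᵀ = P := pinv_symm _ P hAT hP1 hP2 hP3 hP4
  have hproj : Bm * P * Bmᵀ = 1 - Jv := proj_identity G hG P hP1 hP2 hP3 hP4
  have hIrT : Irᵀ = Ir := by rw [hIr]; exact Matrix.transpose_one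
  have hIrI : Ir * Ir = Ir := by rw [hIr, Matrix.one_mul]
  have hBrT : Brᵀ = BTr := by
    rw [hBr2, hBTr, ← Matrix.kroneckerMap_transpose, hIrT]
  have hBTrT : BTrᵀ = Br := by
    rw [← hBrT, Matrix.transpose_transpose]
  have hBmJ : Bmᵀ * Jv = 0 := by
    ext d v
    simp only [Matrix.mul_apply, Matrix.transpose_apply, Matrix.zero_apply, hJv, Matrix.of_apply]
    rw [hBm, dart_col_mul G d (fun _ => (1 : ℝ) / Fintype.card V)]
    ring
  have hBTJ : BTr * J = 0 := by
    rw [hBTr, hJ, ← Matrix.mul_kronecker_mul, hBmJ, hIrI, Matrix.zero_kronecker]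
  have hprojr : hmat * BTr = 1 - J := by
    rw [hhmat, hBTr, ← Matrix.mul_kronecker_mul, hIrI, Matrix.mul_assoc, ← Matrix.mul_assoc,
      hproj, sub_kronecker', hJ]
    congr 1
    rw [hIr, Matrix.one_kronecker_one]
  have hPrT : Prᵀ = Pr := by
    rw [hPr, ← Matrix.kroneckerMap_transpose, hIrT, hPT]
  have hmatT : hmatᵀ = Pr * BTr := by
    rw [hhmat, hPr, hBTr, ← Matrix.kroneckerMap_transpose, hIrT, Matrix.transpose_mul, hPT,
      ← Matrix.mul_kronecker_mul, hIrI]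
  -- vector identities
  have hxsplit : ∀ t : ℝ, x t = xhat t + ε t := by
    intro t; rw [hε t]; abel
  have hBTry : ∀ t : ℝ, BTr.mulVec (y t) = ξhat t + BTr.mulVec (ε t) := by
    intro t
    have h1 : y t = x t - J.mulVec (φ t) := rfl
    rw [h1, Matrix.mulVec_sub, Matrix.mulVec_mulVec, hBTJ, Matrix.zero_mulVec, sub_zero,
      hxsplit t, Matrix.mulVec_add, hξhat t]
  have hw' : ∀ t : ℝ, w t = Br.mulVec (uvec t) := by
    intro t
    have hdiag : ((Matrix.diagonal fun j => κ j t).mulVec fun j => Real.sign (ξhat t j))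
        = uvec t := by
      funext j
      rw [Matrix.mulVec_diagonal]
    rw [hw t, hdiag]
  have hfun_eq : ∀ t : ℝ,
      hfun t = γ • (φ t - J.mulVec (φ t)) + (φ' t - J.mulVec (φ' t)) := by
    intro t
    have h1 : hfun t = hmat.mulVec (γ • BTr.mulVec (φ t) + BTr.mulVec (φ' t)) := rfl
    rw [h1, Matrix.mulVec_add, Matrix.mulVec_smul, Matrix.mulVec_mulVec, Matrix.mulVec_mulVec,
      hprojr, Matrix.sub_mulVec, Matrix.sub_mulVec, Matrix.one_mulVec, Matrix.one_mulVec]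
  -- scalar identities
  have I1 : ∀ t : ℝ, ∑ p, y t p * w t p
      = (∑ j, κ j t * |ξhat t j|) + ∑ p, ε t p * w t p := by
    intro t
    have e1 : (∑ p, y t p * w t p) = y t ⬝ᵥ w t := rfl
    rw [e1, hw' t, Matrix.dotProduct_mulVec, ← Matrix.mulVec_transpose, hBrT, hBTry t,
      add_dotProduct]
    congr 1
    · refine Finset.sum_congr rfl fun j _ => ?_
      have e2 : uvec t j = κ j t * Real.sign (ξhat t j) := rfl
      rw [e2, show ξhat t j * (κ j t * Real.sign (ξhat t j))
          = κ j t * (ξhat t j * Real.sign (ξhat t j)) from by ring, mul_sign_eq_abs]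
    · rw [← hBrT, Matrix.mulVec_transpose, ← Matrix.dotProduct_mulVec, ← hw' t]
      rfl
  have I2 : ∀ t : ℝ, ∑ p, y t p * hfun t p
      = (∑ j, ξhat t j * (Pr.mulVec (g t)) j) + ∑ p, ε t p * hfun t p := by
    intro t
    have e1 : (∑ p, y t p * hfun t p) = y t ⬝ᵥ hmat.mulVec (g t) := rfl
    rw [e1, Matrix.dotProduct_mulVec, ← Matrix.mulVec_transpose, hmatT,
      ← Matrix.mulVec_mulVec, hBTry t, Matrix.mulVec_add, add_dotProduct]
    congr 1
    · rw [dotProduct_comm, Matrix.dotProduct_mulVec, ← Matrix.mulVec_transpose, hPrT,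
        dotProduct_comm]
      rfl
    · rw [Matrix.mulVec_mulVec, ← hmatT, Matrix.mulVec_transpose, ← Matrix.dotProduct_mulVec]
      rfl
  -- pointwise bounds
  have hgb : ∀ t ≥ t₀, ∀ j, |g t j| ≤ c := by
    intro t ht j
    have e1 : g t j = γ * (BTr.mulVec (φ t)) j + (BTr.mulVec (φ' t)) j := rfl
    have h1 : |(BTr.mulVec (φ t)) j| ≤ φbar :=
      le_trans (norm_le_pi_norm (BTr.mulVec (φ t)) j) (hφbar t ht)
    have h2 : |(BTr.mulVec (φ' t)) j| ≤ dφbar :=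
      le_trans (norm_le_pi_norm (BTr.mulVec (φ' t)) j) (hdφbar t ht)
    calc |g t j| ≤ |γ * (BTr.mulVec (φ t)) j| + |(BTr.mulVec (φ' t)) j| := by
          rw [e1]; exact abs_add_le _ _
      _ ≤ γ * φbar + dφbar := by
          rw [abs_mul, abs_of_pos hγ]
          have := mul_le_mul_of_nonneg_left h1 (le_of_lt hγ)
          linarith
      _ = c := hc.symm
  have hPrgb : ∀ t ≥ t₀, ∀ j, |(Pr.mulVec (g t)) j| ≤ κbar := by
    intro t ht j
    calc |(Pr.mulVec (g t)) j| ≤ (∑ k, |Pr j k|) * c := abs_mulVec_le Pr (g t) c (hgb t ht) j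
      _ ≤ matInfNorm Pr * c := by
          refine mul_le_mul_of_nonneg_right ?_ hc0
          exact rowsum_le_matInfNorm' Pr j
      _ = κbar := hκbar.symm
  have hhb : ∀ t ≥ t₀, ∀ p, |hfun t p| ≤ Mc := by
    intro t ht p
    calc |hfun t p| ≤ (∑ k, |hmat p k|) * c := abs_mulVec_le hmat (g t) c (hgb t ht) p
      _ ≤ matInfNorm hmat * c := by
          refine mul_le_mul_of_nonneg_right ?_ hc0
          exact rowsum_le_matInfNorm' hmat p
      _ = Mc := hMc.symm
  -- η nonnegativity
  have hηpos : ∀ i, ∀ t ≥ t₀, 0 ≤ η i t := by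
    intro i t ht
    obtain ⟨hθ0, hθ1⟩ := hθ i
    have hδ0 : (0:ℝ) < δ i := lt_of_lt_of_le one_pos (hδ i)
    set K : ℝ := α i + δ i / θ i with hK
    have hK0 : 0 < K := add_pos (hα i) (div_pos hδ0 hθ0)
    have Hm : ∀ s ≥ t₀, HasDerivAt (fun u => η i u * Real.exp (K * u))
        ((-α i * η i s - δ i * si i s) * Real.exp (K * s)
          + η i s * (Real.exp (K * s) * K)) s := by
      intro s hs
      have hexp : HasDerivAt (fun u => Real.exp (K * u)) (Real.exp (K * s) * K) s := by
        have h1 : HasDerivAt (fun u : ℝ => K * u) K s :=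
          ((hasDerivAt_id s).const_mul K).congr_deriv (mul_one K)
        exact h1.exp
      exact (hη i s hs).mul hexp
    have hmono : MonotoneOn (fun u => η i u * Real.exp (K * u)) (Set.Ici t₀) := by
      refine monoOn_of_hasDerivAt _ (convex_Ici t₀) _
        (fun s => (-α i * η i s - δ i * si i s) * Real.exp (K * s)
          + η i s * (Real.exp (K * s) * K)) (fun s hs => Hm s hs) (fun s hs => ?_)
      have htr : θ i * si i s ≤ η i s := htrig i s hs
      have hexp0 : (0:ℝ) < Real.exp (K * s) := Real.exp_pos _
      have key : (-α i * η i s - δ i * si i s) + η i s * K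
          = (δ i / θ i) * (η i s - θ i * si i s) := by
        rw [hK]; field_simp; ring
      have key2 : 0 ≤ (δ i / θ i) * (η i s - θ i * si i s) := by
        apply mul_nonneg (le_of_lt (div_pos hδ0 hθ0))
        linarith
      show 0 ≤ (-α i * η i s - δ i * si i s) * Real.exp (K * s)
          + η i s * (Real.exp (K * s) * K)
      have e1 : (-α i * η i s - δ i * si i s) * Real.exp (K * s)
          + η i s * (Real.exp (K * s) * K)
          = ((-α i * η i s - δ i * si i s) + η i s * K) * Real.exp (K * s) := by ring
      rw [e1, key]
      exact mul_nonneg key2 (le_of_lt hexp0)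
    have h1 : η i t₀ * Real.exp (K * t₀) ≤ η i t * Real.exp (K * t) :=
      hmono Set.self_mem_Ici ht ht
    have h2 : 0 < η i t₀ * Real.exp (K * t₀) := mul_pos (hη0 i) (Real.exp_pos _)
    nlinarith [Real.exp_pos (K * t)]
  -- derivative of y
  have Hy : ∀ t ≥ t₀, HasDerivAt y (yd t) t := by
    intro t ht
    have h1 : HasDerivAt (fun s => z s + φ s - J.mulVec (φ s))
        ((-γ • z t - w t) + φ' t - J.mulVec (φ' t)) t :=
      ((hz t ht).add (hφ t)).sub (hasDerivAt_mulVec J φ (φ' t) t (hφ t))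
    have h2 : y = fun s => z s + φ s - J.mulVec (φ s) := by
      funext s
      show x s - J.mulVec (φ s) = z s + φ s - J.mulVec (φ s)
      rw [hx s]
    have h3 : (-γ • z t - w t) + φ' t - J.mulVec (φ' t) = yd t := by
      have e1 : yd t = (-γ) • y t + hfun t - w t := rfl
      rw [e1, hfun_eq t]
      funext p
      have e2 : y t p = x t p - J.mulVec (φ t) p := rfl
      simp only [Pi.add_apply, Pi.sub_apply, Pi.smul_apply, smul_eq_mul, e2]
      have e3 : x t p = z t p + φ t p := by rw [hx t]; rfl
      rw [e3]
      ring
    rw [h2, ← h3]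
    exact h1
  have Hyp : ∀ t ≥ t₀, ∀ p, HasDerivAt (fun s => y s p) (yd t p) t :=
    fun t ht p => hasDerivAt_apply_pi y (yd t) t (Hy t ht) p
  -- the Lyapunov function
  set Vf : ℝ → ℝ := fun t => (1/2) * f t + (∑ i, η i t / δ i)
    + (1/2) * ∑ j, (κ j t - κbar)^2 with hVf
  set Vd : ℝ → ℝ := fun t => (∑ p, y t p * yd t p)
    + (∑ i, (-α i * η i t - δ i * si i t) / δ i)
    + (∑ j, (κ j t - κbar) * |ξhat t j|) with hVd
  have HV : ∀ t ≥ t₀, HasDerivAt Vf (Vd t) t := by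
    intro t ht
    have p1 : HasDerivAt (fun s => (1/2 : ℝ) * f s) (∑ p, y t p * yd t p) t := by
      have hterm : ∀ p : V × Fin r, HasDerivAt (fun s => (y s p)^2)
          (2 * (y t p * yd t p)) t := by
        intro p
        have h := ((Hyp t ht p).fun_mul (Hyp t ht p)).congr_deriv
          (show yd t p * y t p + y t p * yd t p = 2 * (y t p * yd t p) from by ring)
        have e : (fun s => y s p * y s p) = fun s => (y s p)^2 := by
          funext s; ring
        rw [e] at h
        exact h
      have hsum : HasDerivAt (fun s => ∑ p, (y s p)^2)
          (∑ p, 2 * (y t p * yd t p)) t :=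
        HasDerivAt.fun_sum (fun p _ => hterm p)
      have h2 : HasDerivAt (fun s => (1/2 : ℝ) * ∑ p, (y s p)^2)
          ((1/2 : ℝ) * ∑ p, 2 * (y t p * yd t p)) t := hsum.const_mul (1/2 : ℝ)
      have e2 : (1/2 : ℝ) * ∑ p, 2 * (y t p * yd t p) = ∑ p, y t p * yd t p := by
        rw [Finset.mul_sum]
        refine Finset.sum_congr rfl fun p _ => by ring
      rw [e2] at h2
      exact h2
    have p2 : HasDerivAt (fun s => ∑ i, η i s / δ i)
        (∑ i, (-α i * η i t - δ i * si i t) / δ i) t :=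
      HasDerivAt.fun_sum (fun i _ => (hη i t ht).div_const (δ i))
    have p3 : HasDerivAt (fun s => (1/2 : ℝ) * ∑ j, (κ j s - κbar)^2)
        (∑ j, (κ j t - κbar) * |ξhat t j|) t := by
      have hterm : ∀ j : G.Dart × Fin r, HasDerivAt (fun s => (κ j s - κbar)^2)
          (2 * ((κ j t - κbar) * |ξhat t j|)) t := by
        intro j
        have hkj : HasDerivAt (fun s => κ j s - κbar) |ξhat t j| t :=
          (hκ j t ht).sub_const κbar
        have h := (hkj.fun_mul hkj).congr_deriv
          (show |ξhat t j| * (κ j t - κbar) + (κ j t - κbar) * |ξhat t j|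
            = 2 * ((κ j t - κbar) * |ξhat t j|) from by ring)
        have e : (fun s => (κ j s - κbar) * (κ j s - κbar)) = fun s => (κ j s - κbar)^2 := by
          funext s; ring
        rw [e] at h
        exact h
      have hsum : HasDerivAt (fun s => ∑ j, (κ j s - κbar)^2)
          (∑ j, 2 * ((κ j t - κbar) * |ξhat t j|)) t :=
        HasDerivAt.fun_sum (fun j _ => hterm j)
      have h2 := hsum.const_mul (1/2 : ℝ)
      have e2 : (1/2 : ℝ) * ∑ j, 2 * ((κ j t - κbar) * |ξhat t j|)
          = ∑ j, (κ j t - κbar) * |ξhat t j| := by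
        rw [Finset.mul_sum]
        refine Finset.sum_congr rfl fun j _ => by ring
      rw [e2] at h2
      exact h2
    exact (p1.add p2).add p3
  have hf0 : ∀ t ≥ t₀, 0 ≤ f t := by
    intro t ht
    exact Finset.sum_nonneg fun p _ => sq_nonneg _
  have HVle : ∀ t ≥ t₀, Vd t ≤ -(γ * f t) := by
    intro t ht
    have hδ0 : ∀ i, (0:ℝ) < δ i := fun i => lt_of_lt_of_le one_pos (hδ i)
    -- decompose the first sum
    have hA1 : (∑ p, y t p * yd t p)
        = -γ * f t + (∑ p, y t p * hfun t p) - (∑ p, y t p * w t p) := by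
      have e0 : ∀ p, y t p * yd t p
          = -γ * (y t p)^2 + y t p * hfun t p - y t p * w t p := by
        intro p
        have e1 : yd t p = -γ * y t p + hfun t p - w t p := by
          show ((-γ) • y t + hfun t - w t) p = _
          simp only [Pi.add_apply, Pi.sub_apply, Pi.smul_apply, smul_eq_mul]
        rw [e1]; ring
      calc (∑ p, y t p * yd t p)
          = ∑ p, (-γ * (y t p)^2 + y t p * hfun t p - y t p * w t p) :=
            Finset.sum_congr rfl fun p _ => e0 p
        _ = (∑ p, -γ * (y t p)^2) + (∑ p, y t p * hfun t p) - (∑ p, y t p * w t p) := by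
            rw [Finset.sum_sub_distrib, Finset.sum_add_distrib]
        _ = -γ * f t + (∑ p, y t p * hfun t p) - (∑ p, y t p * w t p) := by
            rw [← Finset.mul_sum]
    -- decompose the second sum
    have hA2 : (∑ i, (-α i * η i t - δ i * si i t) / δ i)
        = -(∑ i, α i * η i t / δ i)
          - ((∑ i, β i * (∑ a, |ε t (i, a)|)) - ∑ p, ε t p * w t p) := by
      have e0 : ∀ i, (-α i * η i t - δ i * si i t) / δ i
          = -(α i * η i t / δ i) - si i t := by
        intro i
        rw [sub_div]
        congr 1
        · rw [neg_mul, neg_div]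
        · exact mul_div_cancel_left₀ _ (ne_of_gt (hδ0 i))
      rw [Finset.sum_congr rfl fun i _ => e0 i, Finset.sum_sub_distrib, Finset.sum_neg_distrib]
      have e1 : (∑ i, si i t)
          = (∑ i, β i * (∑ a, |ε t (i, a)|)) - ∑ p, ε t p * w t p := by
        have e2 : ∀ i, si i t
            = β i * (∑ a, |ε t (i, a)|) - ∑ a, w t (i, a) * ε t (i, a) := fun i => rfl
        rw [Finset.sum_congr rfl fun i _ => e2 i, Finset.sum_sub_distrib]
        congr 1
        rw [Fintype.sum_prod_type]
        refine Finset.sum_congr rfl fun i _ => Finset.sum_congr rfl fun a _ => by ring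
      rw [e1]
    -- decompose the third sum
    have hA3 : (∑ j, (κ j t - κbar) * |ξhat t j|)
        = (∑ j, κ j t * |ξhat t j|) - κbar * (∑ j, |ξhat t j|) := by
      rw [Finset.mul_sum, ← Finset.sum_sub_distrib]
      refine Finset.sum_congr rfl fun j _ => by ring
    -- bounds
    have b1 : (∑ j, ξhat t j * (Pr.mulVec (g t)) j) ≤ κbar * (∑ j, |ξhat t j|) := by
      rw [Finset.mul_sum]
      refine Finset.sum_le_sum fun j _ => ?_
      calc ξhat t j * (Pr.mulVec (g t)) j ≤ |ξhat t j * (Pr.mulVec (g t)) j| := le_abs_self _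
        _ = |ξhat t j| * |(Pr.mulVec (g t)) j| := abs_mul _ _
        _ ≤ |ξhat t j| * κbar := mul_le_mul_of_nonneg_left (hPrgb t ht j) (abs_nonneg _)
        _ = κbar * |ξhat t j| := mul_comm _ _
    have b2 : (∑ p, ε t p * hfun t p) ≤ ∑ i, β i * (∑ a, |ε t (i, a)|) := by
      have step1 : (∑ p, ε t p * hfun t p) ≤ ∑ p, |ε t p| * Mc := by
        refine Finset.sum_le_sum fun p _ => ?_
        calc ε t p * hfun t p ≤ |ε t p * hfun t p| := le_abs_self _
          _ = |ε t p| * |hfun t p| := abs_mul _ _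
          _ ≤ |ε t p| * Mc := mul_le_mul_of_nonneg_left (hhb t ht p) (abs_nonneg _)
      have step2 : (∑ p : V × Fin r, |ε t p| * Mc) = ∑ i, (∑ a, |ε t (i, a)|) * Mc := by
        rw [Fintype.sum_prod_type]
        refine Finset.sum_congr rfl fun i _ => ?_
        rw [Finset.sum_mul]
      have step3 : (∑ i, (∑ a, |ε t (i, a)|) * Mc) ≤ ∑ i, β i * (∑ a, |ε t (i, a)|) := by
        refine Finset.sum_le_sum fun i _ => ?_
        rw [mul_comm]
        refine mul_le_mul_of_nonneg_right (hMcβ i) ?_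
        exact Finset.sum_nonneg fun a _ => abs_nonneg _
      calc (∑ p, ε t p * hfun t p) ≤ ∑ p, |ε t p| * Mc := step1
        _ = ∑ i, (∑ a, |ε t (i, a)|) * Mc := step2
        _ ≤ ∑ i, β i * (∑ a, |ε t (i, a)|) := step3
    have b3 : 0 ≤ ∑ i, α i * η i t / δ i :=
      Finset.sum_nonneg fun i _ => div_nonneg
        (mul_nonneg (le_of_lt (hα i)) (hηpos i t ht)) (le_of_lt (hδ0 i))
    have hVdeq : Vd t = (∑ p, y t p * yd t p)
        + (∑ i, (-α i * η i t - δ i * si i t) / δ i)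
        + (∑ j, (κ j t - κbar) * |ξhat t j|) := rfl
    rw [hVdeq, hA1, hA2, hA3, I1 t, I2 t]
    linarith
  have HV0 : ∀ t ≥ t₀, 0 ≤ Vf t := by
    intro t ht
    have h1 : 0 ≤ (1/2 : ℝ) * f t := by
      have := hf0 t ht; linarith
    have h2 : 0 ≤ ∑ i, η i t / δ i :=
      Finset.sum_nonneg fun i _ => div_nonneg (hηpos i t ht)
        (le_of_lt (lt_of_lt_of_le one_pos (hδ i)))
    have h3 : 0 ≤ (1/2 : ℝ) * ∑ j, (κ j t - κbar)^2 := by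
      have : 0 ≤ ∑ j, (κ j t - κbar)^2 := Finset.sum_nonneg fun j _ => sq_nonneg _
      linarith
    have e : Vf t = (1/2) * f t + (∑ i, η i t / δ i) + (1/2) * ∑ j, (κ j t - κbar)^2 := rfl
    rw [e]
    linarith
  have hVanti : AntitoneOn Vf (Set.Ici t₀) := by
    refine antiOn_of_hasDerivAt _ (convex_Ici t₀) _ _ (fun s hs => HV s hs) (fun s hs => ?_)
    have h1 := HVle s hs
    have h2 := hf0 s hs
    nlinarith [mul_nonneg (le_of_lt hγ) h2]
  -- boundedness
  set Ymax : ℝ := Real.sqrt (2 * Vf t₀) with hYmax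
  set Kmax : ℝ := |κbar| + Real.sqrt (2 * Vf t₀) with hKmax
  have hVle0 : ∀ t ≥ t₀, Vf t ≤ Vf t₀ := fun t ht => hVanti (Set.self_mem_Ici) ht ht
  have hVf0 : 0 ≤ Vf t₀ := HV0 t₀ (le_refl _)
  have hcompf : ∀ t ≥ t₀, f t ≤ 2 * Vf t₀ := by
    intro t ht
    have h2 : 0 ≤ ∑ i, η i t / δ i :=
      Finset.sum_nonneg fun i _ => div_nonneg (hηpos i t ht)
        (le_of_lt (lt_of_lt_of_le one_pos (hδ i)))
    have h3 : 0 ≤ ∑ j, (κ j t - κbar)^2 := Finset.sum_nonneg fun j _ => sq_nonneg _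
    have e : Vf t = (1/2) * f t + (∑ i, η i t / δ i) + (1/2) * ∑ j, (κ j t - κbar)^2 := rfl
    have h5 := hVle0 t ht
    rw [e] at h5
    generalize hV0g : Vf t₀ = V0 at h5 ⊢
    linarith
  have hcompκ : ∀ t ≥ t₀, ∀ j, (κ j t - κbar)^2 ≤ 2 * Vf t₀ := by
    intro t ht j
    have h1 : 0 ≤ (1/2 : ℝ) * f t := by have := hf0 t ht; linarith
    have h2 : 0 ≤ ∑ i, η i t / δ i :=
      Finset.sum_nonneg fun i _ => div_nonneg (hηpos i t ht)
        (le_of_lt (lt_of_lt_of_le one_pos (hδ i)))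
    have h3 : (κ j t - κbar)^2 ≤ ∑ k, (κ k t - κbar)^2 :=
      Finset.single_le_sum (f := fun k => (κ k t - κbar)^2)
        (fun k _ => sq_nonneg _) (Finset.mem_univ j)
    have e : Vf t = (1/2) * f t + (∑ i, η i t / δ i) + (1/2) * ∑ k, (κ k t - κbar)^2 := rfl
    have h5 := hVle0 t ht
    rw [e] at h5
    generalize hV0g : Vf t₀ = V0 at h5 ⊢
    linarith
  have hyb : ∀ t ≥ t₀, ∀ p, |y t p| ≤ Ymax := by
    intro t ht p
    have h1 : (y t p)^2 ≤ f t :=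
      Finset.single_le_sum (fun q _ => sq_nonneg (y t q)) (Finset.mem_univ p)
    have h2 : (y t p)^2 ≤ 2 * Vf t₀ := le_trans h1 (hcompf t ht)
    calc |y t p| = Real.sqrt ((y t p)^2) := (Real.sqrt_sq_eq_abs _).symm
      _ ≤ Real.sqrt (2 * Vf t₀) := Real.sqrt_le_sqrt h2
      _ = Ymax := hYmax.symm
  have hYmax0 : 0 ≤ Ymax := by rw [hYmax]; exact Real.sqrt_nonneg _
  have hκb : ∀ t ≥ t₀, ∀ j, |κ j t| ≤ Kmax := by
    intro t ht j
    have h1 : |κ j t - κbar| ≤ Real.sqrt (2 * Vf t₀) := by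
      calc |κ j t - κbar| = Real.sqrt ((κ j t - κbar)^2) := (Real.sqrt_sq_eq_abs _).symm
        _ ≤ Real.sqrt (2 * Vf t₀) := Real.sqrt_le_sqrt (hcompκ t ht j)
    calc |κ j t| = |κbar + (κ j t - κbar)| := by ring_nf
      _ ≤ |κbar| + |κ j t - κbar| := abs_add_le _ _
      _ ≤ |κbar| + Real.sqrt (2 * Vf t₀) := by linarith
      _ = Kmax := hKmax.symm
  have hKmax0 : 0 ≤ Kmax := by
    rw [hKmax]
    have := Real.sqrt_nonneg (2 * Vf t₀)
    have := abs_nonneg κbar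
    linarith
  have hub : ∀ t ≥ t₀, ∀ j, |uvec t j| ≤ Kmax := by
    intro t ht j
    have e : uvec t j = κ j t * Real.sign (ξhat t j) := rfl
    rw [e, abs_mul]
    calc |κ j t| * |Real.sign (ξhat t j)| ≤ Kmax * 1 :=
        mul_le_mul (hκb t ht j) (abs_sign_le_one _) (abs_nonneg _) hKmax0
      _ = Kmax := mul_one _
  have hwb : ∀ t ≥ t₀, ∀ p, |w t p| ≤ matInfNorm Br * Kmax := by
    intro t ht p
    rw [hw' t]
    calc |Br.mulVec (uvec t) p| ≤ (∑ k, |Br p k|) * Kmax :=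
        abs_mulVec_le Br (uvec t) Kmax (hub t ht) p
      _ ≤ matInfNorm Br * Kmax :=
        mul_le_mul_of_nonneg_right (rowsum_le_matInfNorm' Br p) hKmax0
  set Dmax : ℝ := γ * Ymax + Mc + matInfNorm Br * Kmax with hDmax
  have hydb : ∀ t ≥ t₀, ∀ p, |yd t p| ≤ Dmax := by
    intro t ht p
    have e1 : yd t p = -γ * y t p + hfun t p - w t p := by
      show ((-γ) • y t + hfun t - w t) p = _
      simp only [Pi.add_apply, Pi.sub_apply, Pi.smul_apply, smul_eq_mul]
    rw [e1]
    have h1 := hyb t ht p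
    have h2 := hhb t ht p
    have h3 := hwb t ht p
    calc |(-γ) * y t p + hfun t p - w t p| ≤ |(-γ) * y t p + hfun t p| + |w t p| :=
        abs_sub _ _
      _ ≤ |(-γ) * y t p| + |hfun t p| + |w t p| := by
          have := abs_add_le ((-γ) * y t p) (hfun t p)
          linarith
      _ = γ * |y t p| + |hfun t p| + |w t p| := by
          rw [abs_mul, abs_neg, abs_of_pos hγ]
      _ ≤ γ * Ymax + Mc + matInfNorm Br * Kmax := by
          have h4 := mul_le_mul_of_nonneg_left h1 (le_of_lt hγ)
          linarith
      _ = Dmax := hDmax.symm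
  -- Lipschitz constant for f
  set N : ℝ := (Fintype.card (V × Fin r) : ℝ) with hN
  set L : ℝ := max (2 * N * Ymax * Dmax) 1 with hL
  have hL0 : 0 < L := lt_of_lt_of_le one_pos (le_max_right _ _)
  set fd : ℝ → ℝ := fun t => ∑ p, (yd t p * y t p + y t p * yd t p) with hfd
  have Hfd : ∀ t ≥ t₀, HasDerivAt f (fd t) t := by
    intro t ht
    have hterm : ∀ p : V × Fin r, HasDerivAt (fun s => (y s p)^2)
        (yd t p * y t p + y t p * yd t p) t := by
      intro p
      have h := (Hyp t ht p).fun_mul (Hyp t ht p)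
      have e : (fun s => y s p * y s p) = fun s => (y s p)^2 := by funext s; ring
      rw [e] at h
      exact h
    exact HasDerivAt.fun_sum (fun p _ => hterm p)
  have hfdb : ∀ t ≥ t₀, -L ≤ fd t := by
    intro t ht
    haveI hNV : Nonempty V := hG.nonempty
    haveI hNF : Nonempty (Fin r) := ⟨⟨0, lt_of_lt_of_le one_pos hr⟩⟩
    have hDmax0 : 0 ≤ Dmax := le_trans (abs_nonneg _) (hydb t ht (Classical.arbitrary _))
    have hterm : ∀ p : V × Fin r, -(2 * (Ymax * Dmax)) ≤ yd t p * y t p + y t p * yd t p := by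
      intro p
      have h1 : |y t p * yd t p| ≤ Ymax * Dmax := by
        rw [abs_mul]
        exact mul_le_mul (hyb t ht p) (hydb t ht p) (abs_nonneg _) hYmax0
      have h2 := neg_abs_le (y t p * yd t p)
      nlinarith [h1, h2]
    have hsum : -(N * (2 * (Ymax * Dmax))) ≤ fd t := by
      have e : fd t = ∑ p, (yd t p * y t p + y t p * yd t p) := rfl
      rw [e]
      calc -(N * (2 * (Ymax * Dmax)))
          = ∑ _p : V × Fin r, -(2 * (Ymax * Dmax)) := by
            rw [Finset.sum_const, Finset.card_univ, nsmul_eq_mul, hN]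
            ring
        _ ≤ ∑ p, (yd t p * y t p + y t p * yd t p) :=
            Finset.sum_le_sum fun p _ => hterm p
    have hLge : N * (2 * (Ymax * Dmax)) ≤ L := by
      rw [hL]
      refine le_trans (le_of_eq (by ring)) (le_max_left (2 * N * Ymax * Dmax) 1)
    linarith
  have hlip : ∀ s t, t₀ ≤ s → s ≤ t → f s - L * (t - s) ≤ f t :=
    lipschitz_lower f fd Hfd hfdb
  have htends : Tendsto f atTop (nhds 0) :=
    lyapunov_tendsto_zero hγ hL0 f Vf Vd hf0 HV0 HV HVle hlip
  -- conclude
  have hsqrt : Tendsto (fun t => Real.sqrt (f t)) atTop (nhds 0) := by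
    have hcont := Real.continuous_sqrt.tendsto 0
    rw [Real.sqrt_zero] at hcont
    exact hcont.comp htends
  show Tendsto y atTop (nhds 0)
  rw [tendsto_pi_nhds]
  intro p
  have hbound : ∀ t, ‖y t p‖ ≤ Real.sqrt (f t) := by
    intro t
    have h1 : (y t p)^2 ≤ f t :=
      Finset.single_le_sum (f := fun q => (y t q)^2)
        (fun q _ => sq_nonneg _) (Finset.mem_univ p)
    calc ‖y t p‖ = |y t p| := rfl
      _ = Real.sqrt ((y t p)^2) := (Real.sqrt_sq_eq_abs _).symm
      _ ≤ Real.sqrt (f t) := Real.sqrt_le_sqrt h1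
  have : Tendsto (fun t => y t p) atTop (nhds 0) := squeeze_zero_norm hbound hsqrt
  simpa using this
end

section
/- Fix r ≥ 1, constants β > 0, θ ∈ (0,1), λ > 0, η₀ > 0, w_max > 0, ẋ_max > 0, and real times t_k < t_{k+1}. Let x : ℝ → ℝ^r be differentiable on [t_k, t_{k+1}] with ‖x'(τ)‖_∞ ≤ ẋ_max for all τ ∈ [t_k, t_{k+1}], and define ε(t) = x(t_k) − x(t) for t ∈ [t_k, t_{k+1}]. Let w : ℝ → ℝ^r satisfy ‖w(t)‖_∞ ≤ w_max for all t, and let η : ℝ → ℝ satisfy η(t) ≥ η₀ e^{−λ t} for all t. If the triggering condition θ (β ‖ε(t_{k+1})‖₁ − w(t_{k+1})ᵀ ε(t_{k+1})) ≥ η(t_{k+1}) holds at time t_{k+1}, then the inter-event time satisfies t_{k+1} − t_k ≥ η₀ e^{−λ t_{k+1}} / (θ (w_max + β) r ẋ_max). -/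
/-- lower bound on the inter-event time for the dynamic event-triggering law.
`x : ℝ → ℝ^r` (with the sup norm on `Fin r → ℝ`) is differentiable on `[t_k, t_{k+1}]` with
`‖x'‖_∞ ≤ ẋ_max`, `ε(t) = x(t_k) - x(t)`, `‖w(t)‖_∞ ≤ w_max`, `η(t) ≥ η₀ e^{-λ t}`.  If the
triggering condition `θ (β ‖ε(t_{k+1})‖₁ - w(t_{k+1})ᵀ ε(t_{k+1})) ≥ η(t_{k+1})` holds, then
`t_{k+1} - t_k ≥ η₀ e^{-λ t_{k+1}} / (θ (w_max + β) r ẋ_max)`. -/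
theorem inter_event_time_lower_bound
    (r : ℕ) (hr : 1 ≤ r) (β θ lam η₀ wmax xdmax : ℝ)
    (hβ : 0 < β) (hθ : θ ∈ Set.Ioo (0 : ℝ) 1) (hlam : 0 < lam) (hη₀ : 0 < η₀)
    (hwmax : 0 < wmax) (hxdmax : 0 < xdmax)
    (tk tk1 : ℝ) (ht : tk < tk1)
    (x x' : ℝ → Fin r → ℝ)
    (hder : ∀ τ ∈ Set.Icc tk tk1, HasDerivWithinAt x (x' τ) (Set.Icc tk tk1) τ)
    (hxd : ∀ τ ∈ Set.Icc tk tk1, ‖x' τ‖ ≤ xdmax)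
    (w : ℝ → Fin r → ℝ) (hw : ∀ t : ℝ, ‖w t‖ ≤ wmax)
    (η : ℝ → ℝ) (hη : ∀ t : ℝ, η₀ * Real.exp (-lam * t) ≤ η t)
    (htrig : θ * (β * (∑ a, |x tk a - x tk1 a|)
        - ∑ a, w tk1 a * (x tk a - x tk1 a)) ≥ η tk1) :
    tk1 - tk ≥ η₀ * Real.exp (-lam * tk1) / (θ * (wmax + β) * r * xdmax) := by
  obtain ⟨hθ0, hθ1⟩ := hθ
  set S : ℝ := ∑ a, |x tk a - x tk1 a| with hS
  -- MVT bound: ‖x tk1 - x tk‖ ≤ xdmax * (tk1 - tk)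
  have hmvt : ‖x tk1 - x tk‖ ≤ xdmax * (tk1 - tk) := by
    have := (convex_Icc tk tk1).norm_image_sub_le_of_norm_hasDerivWithin_le
      hder hxd (Set.left_mem_Icc.2 ht.le) (Set.right_mem_Icc.2 ht.le)
    simpa [abs_of_nonneg (sub_nonneg.2 ht.le)] using this
  -- S ≤ r * ‖x tk1 - x tk‖
  have hSle : S ≤ r * (xdmax * (tk1 - tk)) := by
    have h1 : S ≤ ∑ _a : Fin r, ‖x tk1 - x tk‖ := by
      apply Finset.sum_le_sum
      intro a _
      have := norm_le_pi_norm (x tk1 - x tk) a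
      simp only [Pi.sub_apply, Real.norm_eq_abs] at this
      calc |x tk a - x tk1 a| = |x tk1 a - x tk a| := abs_sub_comm _ _
        _ ≤ ‖x tk1 - x tk‖ := this
    calc S ≤ ∑ _a : Fin r, ‖x tk1 - x tk‖ := h1
      _ = r * ‖x tk1 - x tk‖ := by simp [Finset.sum_const, mul_comm]
      _ ≤ r * (xdmax * (tk1 - tk)) := by
          apply mul_le_mul_of_nonneg_left hmvt (by positivity)
  -- dot product bound
  have hdot : -(∑ a, w tk1 a * (x tk a - x tk1 a)) ≤ wmax * S := by
    rw [← Finset.sum_neg_distrib, hS, Finset.mul_sum]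
    apply Finset.sum_le_sum
    intro a _
    have hwa : |w tk1 a| ≤ wmax := by
      have := norm_le_pi_norm (w tk1) a
      simp only [Real.norm_eq_abs] at this
      exact this.trans (hw tk1)
    calc -(w tk1 a * (x tk a - x tk1 a)) ≤ |w tk1 a * (x tk a - x tk1 a)| :=
            neg_le_abs _
      _ = |w tk1 a| * |x tk a - x tk1 a| := abs_mul _ _
      _ ≤ wmax * |x tk a - x tk1 a| :=
            mul_le_mul_of_nonneg_right hwa (abs_nonneg _)
  have hS0 : 0 ≤ S := Finset.sum_nonneg fun a _ => abs_nonneg _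
  have hchain : η₀ * Real.exp (-lam * tk1) ≤ θ * (wmax + β) * S := by
    calc η₀ * Real.exp (-lam * tk1) ≤ η tk1 := hη tk1
      _ ≤ θ * (β * S - ∑ a, w tk1 a * (x tk a - x tk1 a)) := htrig
      _ ≤ θ * (β * S + wmax * S) := by
          apply mul_le_mul_of_nonneg_left _ hθ0.le
          linarith [hdot]
      _ = θ * (wmax + β) * S := by ring
  have hD : 0 < θ * (wmax + β) * r * xdmax := by positivity
  rw [ge_iff_le, div_le_iff₀ hD]
  calc η₀ * Real.exp (-lam * tk1) ≤ θ * (wmax + β) * S := hchain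
    _ ≤ θ * (wmax + β) * (r * (xdmax * (tk1 - tk))) :=
        mul_le_mul_of_nonneg_left hSle (by positivity)
    _ = (tk1 - tk) * (θ * (wmax + β) * r * xdmax) := by ring
end

section
/- Fix r ≥ 1, constants β > 0, θ ∈ (0,1), λ > 0, η₀ > 0, w_max > 0, ẋ_max > 0, and let x : ℝ → ℝ^r be differentiable with ‖x'(τ)‖_∞ ≤ ẋ_max for all τ, w : ℝ → ℝ^r with ‖w(t)‖_∞ ≤ w_max for all t, and η : ℝ → ℝ with η(t) ≥ η₀ e^{−λ t} for all t. Let (t_k)_{k∈ℕ} be a strictly increasing sequence of event times such that for every k, the triggering condition θ (β ‖x(t_k) − x(t_{k+1})‖₁ − w(t_{k+1})ᵀ (x(t_k) − x(t_{k+1}))) ≥ η(t_{k+1}) holds. Then the sequence (t_k) has no finite limit: sup_k t_k = +∞ (i.e., there is no Zeno behavior; infinitely many events cannot accumulate in finite time). -/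
/-- exclusion of Zeno behavior.  For a strictly increasing sequence of event
times `(t_k)` of an agent with state `x : ℝ → ℝ^r` (sup norm on `Fin r → ℝ`, `‖x'‖_∞ ≤ ẋ_max`),
bounded input `‖w(t)‖_∞ ≤ w_max`, and internal triggering variable `η(t) ≥ η₀ e^{-λ t}`, if the
triggering condition holds at every event, the event times tend to `+∞` (they cannot
accumulate in finite time). -/
theorem no_zeno_behavior
    (r : ℕ) (hr : 1 ≤ r) (β θ lam η₀ wmax xdmax : ℝ)
    (hβ : 0 < β) (hθ : θ ∈ Set.Ioo (0 : ℝ) 1) (hlam : 0 < lam) (hη₀ : 0 < η₀)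
    (hwmax : 0 < wmax) (hxdmax : 0 < xdmax)
    (x x' : ℝ → Fin r → ℝ)
    (hder : ∀ τ : ℝ, HasDerivAt x (x' τ) τ)
    (hxd : ∀ τ : ℝ, ‖x' τ‖ ≤ xdmax)
    (w : ℝ → Fin r → ℝ) (hw : ∀ t : ℝ, ‖w t‖ ≤ wmax)
    (η : ℝ → ℝ) (hη : ∀ t : ℝ, η₀ * Real.exp (-lam * t) ≤ η t)
    (t : ℕ → ℝ) (hmono : StrictMono t)
    (htrig : ∀ k : ℕ, θ * (β * (∑ a, |x (t k) a - x (t (k + 1)) a|)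
        - ∑ a, w (t (k + 1)) a * (x (t k) a - x (t (k + 1)) a)) ≥ η (t (k + 1))) :
    Filter.Tendsto t Filter.atTop Filter.atTop := by
  rcases tendsto_of_monotone hmono.monotone with h | ⟨l, hl⟩
  · exact h
  exfalso
  have hθ0 := hθ.1
  -- every t k ≤ l
  have hle : ∀ k, t k ≤ l := fun k => hmono.monotone.ge_of_tendsto hl k
  -- mean value bound
  have hmvt : ∀ a b : ℝ, a ≤ b → ‖x b - x a‖ ≤ xdmax * (b - a) := by
    intro a b hab
    have := norm_image_sub_le_of_norm_deriv_le_segment'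
      (f := x) (f' := x') (a := a) (b := b) (C := xdmax)
      (fun τ hτ => (hder τ).hasDerivWithinAt) (fun τ hτ => hxd τ)
      b (Set.right_mem_Icc.2 hab)
    exact this
  set C : ℝ := θ * (β + wmax) * r * xdmax with hC
  have hCpos : 0 < C := by
    have : (0:ℝ) < r := by exact_mod_cast lt_of_lt_of_le Nat.one_pos hr
    positivity
  set δ : ℝ := η₀ * Real.exp (-lam * l) / C with hδ
  have hδpos : 0 < δ := div_pos (mul_pos hη₀ (Real.exp_pos _)) hCpos
  -- uniform gap lower bound
  have hgap : ∀ k, δ ≤ t (k + 1) - t k := by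
    intro k
    set a := t k
    set b := t (k + 1)
    have hab : a < b := hmono (Nat.lt_succ_self k)
    set d : Fin r → ℝ := fun i => x a i - x b i with hd
    have hdn : ∀ i, |d i| ≤ xdmax * (b - a) := by
      intro i
      have h1 : |d i| ≤ ‖x b - x a‖ := by
        have := norm_le_pi_norm (x b - x a) i
        simpa [Real.norm_eq_abs, abs_sub_comm, hd, Pi.sub_apply] using this
      exact h1.trans (hmvt a b hab.le)
    have hS : (∑ i, |d i|) ≤ r * (xdmax * (b - a)) := by
      calc (∑ i, |d i|) ≤ ∑ _i : Fin r, xdmax * (b - a) :=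
            Finset.sum_le_sum fun i _ => hdn i
        _ = r * (xdmax * (b - a)) := by simp [mul_comm]
    have hD : -(wmax * ∑ i, |d i|) ≤ ∑ i, w b i * d i := by
      have : ∀ i ∈ Finset.univ, -(wmax * |d i|) ≤ w b i * d i := by
        intro i _
        have h1 : |w b i * d i| ≤ wmax * |d i| := by
          rw [abs_mul]
          exact mul_le_mul_of_nonneg_right
            ((by simpa [Real.norm_eq_abs] using norm_le_pi_norm (w b) i : |w b i| ≤ ‖w b‖).trans (hw b))
            (abs_nonneg _)
        linarith [neg_abs_le (w b i * d i)]
      calc -(wmax * ∑ i, |d i|) = ∑ i, -(wmax * |d i|) := by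
            rw [Finset.mul_sum, ← Finset.sum_neg_distrib]
        _ ≤ ∑ i, w b i * d i := Finset.sum_le_sum this
    have hSnn : 0 ≤ ∑ i, |d i| := Finset.sum_nonneg fun i _ => abs_nonneg _
    have htr := htrig k
    have hηb : η₀ * Real.exp (-lam * l) ≤ η b := by
      refine le_trans ?_ (hη b)
      have : Real.exp (-lam * l) ≤ Real.exp (-lam * b) := by
        apply Real.exp_le_exp.2
        have := hle (k + 1)
        nlinarith
      nlinarith [Real.exp_pos (-lam * l)]
    have key : η₀ * Real.exp (-lam * l) ≤ C * (b - a) := by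
      have h2 : θ * (β * (∑ i, |d i|) - ∑ i, w b i * d i)
          ≤ θ * ((β + wmax) * (∑ i, |d i|)) := by
        apply mul_le_mul_of_nonneg_left _ hθ0.le
        nlinarith
      have h3 : θ * ((β + wmax) * (∑ i, |d i|)) ≤ C * (b - a) := by
        have hbw : (0:ℝ) ≤ θ * (β + wmax) := by nlinarith
        calc θ * ((β + wmax) * (∑ i, |d i|)) = (θ * (β + wmax)) * (∑ i, |d i|) := by ring
          _ ≤ (θ * (β + wmax)) * (↑r * (xdmax * (b - a))) :=
              mul_le_mul_of_nonneg_left hS hbw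
          _ = C * (b - a) := by rw [hC]; ring
      calc η₀ * Real.exp (-lam * l) ≤ η b := hηb
        _ ≤ θ * (β * (∑ i, |d i|) - ∑ i, w b i * d i) := htr
        _ ≤ C * (b - a) := h2.trans h3
      -- done
    rw [hδ, div_le_iff₀ hCpos]
    linarith [key]
  -- t k grows at least linearly, contradicting t k ≤ l
  have hgrow : ∀ k : ℕ, t 0 + k * δ ≤ t k := by
    intro k
    induction k with
    | zero => simp
    | succ n ih =>
      have := hgap n
      push_cast
      linarith
  obtain ⟨n, hn⟩ := Archimedean.arch (l - t 0) hδpos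
  have h1 := hgrow (n + 1)
  have h2 := hle (n + 1)
  have : l - t 0 ≤ (n : ℝ) * δ := by
    rw [nsmul_eq_mul] at hn; linarith
  push_cast at h1
  linarith
end

section
/- Let G be a connected undirected graph on n vertices and let B ∈ ℝ^{n×ℓ} be the oriented incidence matrix obtained by regarding each undirected edge as two oppositely oriented directed edges. Let (BᵀB)⁺ denote the Moore–Penrose pseudoinverse of BᵀB. Then B (BᵀB)⁺ Bᵀ = I_n − (1/n) 1_n 1_nᵀ. -/
open Matrix Kronecker

/-- Column sums of the incidence matrix against any function. -/
lemma sum_incidence_mul {V : Type*} [Fintype V] [DecidableEq V] (G : SimpleGraph V)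
    [DecidableRel G.Adj] (d : G.Dart) (f : V → ℝ) :
    ∑ v, dartIncidence G v d * f v = f d.snd - f d.fst := by
  have key : ∀ v, dartIncidence G v d * f v
      = (if d.snd = v then f v else 0) + (if d.fst = v then -f v else 0) := by
    intro v
    by_cases h1 : d.snd = v
    · by_cases h2 : d.fst = v
      · exact absurd (h2.trans h1.symm) d.fst_ne_snd
      · simp [dartIncidence, h1, h2]
    · by_cases h2 : d.fst = v
      · simp [dartIncidence, h1, h2]
      · simp [dartIncidence, h1, h2]
  rw [Finset.sum_congr rfl fun v _ => key v, Finset.sum_add_distrib,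
      Finset.sum_ite_eq, Finset.sum_ite_eq]
  simp [sub_eq_add_neg]

/-- for a connected graph with doubled-edge oriented incidence matrix `B`,
and `(BᵀB)⁺` the Moore–Penrose pseudoinverse of `BᵀB` (characterized by the four Penrose
conditions), one has `B (BᵀB)⁺ Bᵀ = Iₙ - (1/n) 1ₙ 1ₙᵀ`. -/
theorem incidence_mul_pinv_mul_transpose_eq_centering
    {V : Type*} [Fintype V] [DecidableEq V] (G : SimpleGraph V) [DecidableRel G.Adj]
    (hG : G.Connected)
    (P : Matrix G.Dart G.Dart ℝ)
    (h1 : ((dartIncidence G)ᵀ * dartIncidence G) * P * ((dartIncidence G)ᵀ * dartIncidence G)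
        = (dartIncidence G)ᵀ * dartIncidence G)
    (h2 : P * ((dartIncidence G)ᵀ * dartIncidence G) * P = P)
    (h3 : (((dartIncidence G)ᵀ * dartIncidence G) * P)ᵀ
        = ((dartIncidence G)ᵀ * dartIncidence G) * P)
    (h4 : (P * ((dartIncidence G)ᵀ * dartIncidence G))ᵀ
        = P * ((dartIncidence G)ᵀ * dartIncidence G)) :
    dartIncidence G * P * (dartIncidence G)ᵀ
      = 1 - Matrix.of (fun _ _ : V => (1 : ℝ) / Fintype.card V) := by
  classical
  have hnV : Nonempty V := hG.nonempty
  have hNpos : (0 : ℝ) < Fintype.card V := by exact_mod_cast Fintype.card_pos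
  have hNne : (Fintype.card V : ℝ) ≠ 0 := ne_of_gt hNpos
  set B : Matrix V G.Dart ℝ := dartIncidence G with hB
  set Jn : Matrix V V ℝ := Matrix.of (fun _ _ : V => (1 : ℝ) / Fintype.card V) with hJ
  -- Step 1 : B * P * Bᵀ * B = B
  have h1' : (Bᵀ * B) * (P * (Bᵀ * B) - 1) = 0 := by
    rw [mul_sub, mul_one, ← mul_assoc, h1, sub_self]
  have hstep : B * (P * (Bᵀ * B) - 1) = 0 := by
    rw [← Matrix.conjTranspose_mul_self_mul_eq_zero]
    rwa [Matrix.conjTranspose_eq_transpose_of_trivial]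
  rw [Matrix.mul_sub, Matrix.mul_one, sub_eq_zero] at hstep
  have hQB : (B * P * Bᵀ) * B = B := by
    rw [Matrix.mul_assoc, Matrix.mul_assoc]; exact hstep
  -- column-sum facts
  have hBtJ : Bᵀ * Jn = 0 := by
    ext d v
    rw [Matrix.mul_apply, Matrix.zero_apply]
    have := sum_incidence_mul G d fun _ => (1 : ℝ) / Fintype.card V
    simpa [hB, hJ, Matrix.transpose_apply] using this
  have hJB : Jn * B = 0 := by
    ext v d
    rw [Matrix.mul_apply, Matrix.zero_apply]
    have h := sum_incidence_mul G d fun _ => (1 : ℝ) / Fintype.card V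
    calc ∑ u, Jn v u * B u d = ∑ u, dartIncidence G u d * ((1 : ℝ) / Fintype.card V) := by
          refine Finset.sum_congr rfl fun u _ => ?_
          simp [hJ, hB, mul_comm]
      _ = 0 := by rw [h]; ring
  have hJJ : Jn * Jn = Jn := by
    ext u v
    rw [Matrix.mul_apply]
    simp only [hJ, Matrix.of_apply]
    rw [Finset.sum_const, Finset.card_univ, nsmul_eq_mul]
    field_simp
  -- the matrix A = B Bᵀ + Jn is invertible
  have hker : ∀ z : V → ℝ, (B * Bᵀ + Jn).mulVec z = 0 → z = 0 := by
    intro z hz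
    have hdot : z ⬝ᵥ (B * Bᵀ + Jn).mulVec z = 0 := by rw [hz, dotProduct_zero]
    rw [Matrix.add_mulVec, dotProduct_add] at hdot
    set s : ℝ := ∑ v, z v with hs
    have e1 : z ⬝ᵥ (B * Bᵀ).mulVec z = (Bᵀ.mulVec z) ⬝ᵥ (Bᵀ.mulVec z) := by
      rw [← Matrix.mulVec_mulVec, Matrix.dotProduct_mulVec, ← Matrix.mulVec_transpose]
    have jv : Jn.mulVec z = fun _ => s / Fintype.card V := by
      funext v
      simp only [Matrix.mulVec, dotProduct, hJ, Matrix.of_apply]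
      rw [← Finset.mul_sum, ← hs]
      ring
    have e2 : z ⬝ᵥ Jn.mulVec z = s * s / Fintype.card V := by
      rw [jv]
      simp only [dotProduct]
      rw [← Finset.sum_mul, ← hs]
      ring
    rw [e1, e2] at hdot
    have n1 : 0 ≤ (Bᵀ.mulVec z) ⬝ᵥ (Bᵀ.mulVec z) := by
      simp only [dotProduct]
      exact Finset.sum_nonneg fun i _ => mul_self_nonneg _
    have n2 : 0 ≤ s * s / Fintype.card V := div_nonneg (mul_self_nonneg s) (le_of_lt hNpos)
    have ha : (Bᵀ.mulVec z) ⬝ᵥ (Bᵀ.mulVec z) = 0 := by linarith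
    have hb : s * s / Fintype.card V = 0 := by linarith
    have hwz : Bᵀ.mulVec z = 0 := dotProduct_self_eq_zero.mp ha
    have hs0 : s = 0 := by
      have : s * s = 0 := by
        rcases (div_eq_zero_iff.mp hb) with h | h
        · exact h
        · exact absurd h hNne
      exact mul_self_eq_zero.mp this
    have hzc : ∀ d : G.Dart, z d.snd = z d.fst := by
      intro d
      have h := congrFun hwz d
      have hsum : Bᵀ.mulVec z d = z d.snd - z d.fst := by
        simp only [Matrix.mulVec, dotProduct, Matrix.transpose_apply, hB]
        exact sum_incidence_mul G d z
      rw [hsum] at h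
      have : z d.snd - z d.fst = 0 := h
      linarith
    have hconst : ∀ u v : V, z u = z v := by
      intro u v
      obtain ⟨p⟩ := hG.preconnected u v
      induction p with
      | nil => rfl
      | cons h p ih => exact ((hzc ⟨(_, _), h⟩).symm).trans ih
    funext v
    have hsum : (Fintype.card V : ℝ) * z v = s := by
      rw [hs, Finset.sum_congr rfl fun u _ => hconst u v, Finset.sum_const,
        Finset.card_univ, nsmul_eq_mul]
    have : (Fintype.card V : ℝ) * z v = 0 := by rw [hsum, hs0]
    have := (mul_eq_zero.mp this).resolve_left hNne
    exact this
  have hUnit : IsUnit (B * Bᵀ + Jn) := by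
    rw [← Matrix.mulVec_injective_iff_isUnit]
    intro x y hxy
    have := hker (x - y) (by rw [Matrix.mulVec_sub, hxy, sub_self])
    exact sub_eq_zero.mp this
  set A : Matrix V V ℝ := B * Bᵀ + Jn with hA
  have hAinv : A * A⁻¹ = 1 := Matrix.mul_nonsing_inv A (A.isUnit_iff_isUnit_det.mp hUnit)
  -- finish
  have hQJ : (B * P * Bᵀ) * Jn = 0 := by
    rw [Matrix.mul_assoc, hBtJ, Matrix.mul_zero]
  have hCB : ((1 : Matrix V V ℝ) - Jn) * B = B := by rw [Matrix.sub_mul, Matrix.one_mul, hJB, sub_zero]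
  have hCJ : ((1 : Matrix V V ℝ) - Jn) * Jn = 0 := by rw [sub_mul, one_mul, hJJ, sub_self]
  have hDB : (B * P * Bᵀ - ((1 : Matrix V V ℝ) - Jn)) * B = 0 := by
    rw [Matrix.sub_mul, hQB, hCB, sub_self]
  have hDA : (B * P * Bᵀ - ((1 : Matrix V V ℝ) - Jn)) * A = 0 := by
    rw [hA, mul_add, ← Matrix.mul_assoc, hDB, Matrix.zero_mul, zero_add, Matrix.sub_mul, hQJ, hCJ, sub_self]
  have hD0 : B * P * Bᵀ - ((1 : Matrix V V ℝ) - Jn) = 0 := by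
    calc B * P * Bᵀ - ((1 : Matrix V V ℝ) - Jn)
        = (B * P * Bᵀ - ((1 : Matrix V V ℝ) - Jn)) * (A * A⁻¹) := by rw [hAinv, mul_one]
      _ = ((B * P * Bᵀ - ((1 : Matrix V V ℝ) - Jn)) * A) * A⁻¹ := by rw [mul_assoc]
      _ = 0 := by rw [hDA, Matrix.zero_mul]
  exact sub_eq_zero.mp hD0
end
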